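/- Let x̂ ∈ ℝⁿ with x̂ᵢ ≥ 0 and Σᵢ x̂ᵢ = 1, let φ be an incentive function, and let x : ℝ → ℝⁿ be differentiable with x(t) in the interior of the simplex for all t and satisfying the incentive dynamic ẋᵢ(t) = φᵢ(x(t)) − xᵢ(t)·Σⱼφⱼ(x(t)). If at time t₀ the ISS inequality Σᵢ x̂ᵢ·φᵢ(x(t₀))/xᵢ(t₀) > Σᵢ φᵢ(x(t₀)) holds, then the Kullback–Leibler divergence V(t) = Σᵢ x̂ᵢ·(log x̂ᵢ − log xᵢ(t)) (with the convention 0·log 0 = 0) has strictly negative derivative at t₀: V′(t₀) = −(Σᵢ x̂ᵢ·φᵢ(x(t₀))/xᵢ(t₀) − Σᵢ φᵢ(x(t₀))) < 0. Hence the KL-divergence D_KL(x̂‖x) is a local Lyapunov function at any ISS of an incentive dynamic. -/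

import Mathlib

/-- Along an interior solution of the incentive dynamic
`ẋᵢ = φᵢ(x) − xᵢ·Σⱼφⱼ(x)`, if the ISS inequality holds at time `t₀`, then the
KL-divergence `V(t) = Σᵢ x̂ᵢ(log x̂ᵢ − log xᵢ(t))` has derivative
`−(Σᵢ x̂ᵢφᵢ(x(t₀))/xᵢ(t₀) − Σᵢφᵢ(x(t₀)))` at `t₀`, which is strictly negative. -/
theorem stmt_17 (n : ℕ) (xhat : Fin n → ℝ)
    (hhat_nonneg : ∀ i, 0 ≤ xhat i) (hhat_sum : (∑ i, xhat i) = 1)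
    (φ : (Fin n → ℝ) → (Fin n → ℝ))
    (x : ℝ → Fin n → ℝ)
    (hint : ∀ t : ℝ, (∀ i, 0 < x t i) ∧ (∑ i, x t i) = 1)
    (hode : ∀ t : ℝ, ∀ i, HasDerivAt (fun s => x s i)
      (φ (x t) i - x t i * ∑ j, φ (x t) j) t)
    (t₀ : ℝ)
    (hISS : (∑ i, xhat i * φ (x t₀) i / x t₀ i) > ∑ i, φ (x t₀) i) :
    HasDerivAt (fun t => ∑ i, xhat i * (Real.log (xhat i) - Real.log (x t i)))
      (-((∑ i, xhat i * φ (x t₀) i / x t₀ i) - ∑ i, φ (x t₀) i)) t₀ ∧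
    -((∑ i, xhat i * φ (x t₀) i / x t₀ i) - ∑ i, φ (x t₀) i) < 0 := by
  constructor
  · have hpos : ∀ i, 0 < x t₀ i := (hint t₀).1
    have h : ∀ i ∈ Finset.univ, HasDerivAt
        (fun t => xhat i * (Real.log (xhat i) - Real.log (x t i)))
        (xhat i * (0 - (φ (x t₀) i - x t₀ i * ∑ j, φ (x t₀) j) / x t₀ i)) t₀ := by
      intro i _
      exact (((hasDerivAt_const t₀ (Real.log (xhat i))).sub
        ((hode t₀ i).log (hpos i).ne')).const_mul (xhat i))
    have := HasDerivAt.sum h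
    convert this using 1
    · rfl
    · rfl
    · ext t
      simp [Finset.sum_apply]
    have heq : ∀ i ∈ Finset.univ,
        xhat i * (0 - (φ (x t₀) i - x t₀ i * ∑ j, φ (x t₀) j) / x t₀ i)
          = xhat i * (∑ j, φ (x t₀) j) - xhat i * φ (x t₀) i / x t₀ i := by
      intro i _
      have hne := (hpos i).ne'
      field_simp
      ring
    rw [Finset.sum_congr rfl heq, Finset.sum_sub_distrib, ← Finset.sum_mul, hhat_sum,
      one_mul]
    ring
  · linarith
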